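/- Let U, W be symmetric positive definite matrices (of sizes m×m and n×n) and V an n×m real matrix. Set S = -W^{-1/2} V U^{-1} Vᵀ W^{-1/2} with symmetric Schur (spectral) decomposition S = Q Λ Qᵀ, where Q is orthogonal and Λ diagonal with all diagonal entries nonzero (i.e., V U^{-1}Vᵀ invertible). Define X = U^{-1} Vᵀ W^{-1/2} Q Λ^{-1} and Y = [[I, X],[0, W^{-1/2} Q]]. Then Y is invertible with Y^{-1} = [[I, -X Qᵀ W^{1/2}],[0, Qᵀ W^{1/2}]], and Y · diag(I, I+Λ) · Y^{-1} = [[I, U^{-1}Vᵀ],[0, I - W^{-1} V U^{-1} Vᵀ]]. In particular, the block upper-triangular matrix [[I, U^{-1}Vᵀ],[0, I - W^{-1}V U^{-1}Vᵀ]] is diagonalizable. -/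

import Mathlib

open Matrix

/-- The square root of a positive semidefinite matrix, as defined in the older Mathlib
(`Matrix.PosSemidef.sqrt`, removed since). -/
noncomputable def Matrix.PosSemidef.sqrt {n : Type*} [Fintype n] [DecidableEq n] {𝕜 : Type*}
    [RCLike 𝕜] [PartialOrder 𝕜] {A : Matrix n n 𝕜} (hA : A.PosSemidef) : Matrix n n 𝕜 :=
  hA.1.eigenvectorUnitary.1 * diagonal ((↑) ∘ (√·) ∘ hA.1.eigenvalues) *
    (star hA.1.eigenvectorUnitary : Matrix n n 𝕜)

theorem stmt3_sqrt_mul_self {n : Type*} [Fintype n] [DecidableEq n] {A : Matrix n n ℝ}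
    (hA : A.PosSemidef) : hA.sqrt * hA.sqrt = A := by
  have hUU : (star hA.1.eigenvectorUnitary : Matrix n n ℝ) * hA.1.eigenvectorUnitary.1 = 1 :=
    Unitary.coe_star_mul_self _
  conv_rhs => rw [hA.1.spectral_theorem, Unitary.conjStarAlgAut_apply]
  unfold Matrix.PosSemidef.sqrt
  simp only [Matrix.mul_assoc]
  rw [← Matrix.mul_assoc (star hA.1.eigenvectorUnitary : Matrix n n ℝ), hUU, Matrix.one_mul,
    ← Matrix.mul_assoc (diagonal _), diagonal_mul_diagonal]
  congr 3
  funext i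
  simp [Real.mul_self_sqrt (hA.eigenvalues_nonneg i)]

/-- Diagonalizability of the block Gauss-Seidel preconditioned matrix: with `U`, `W`
symmetric positive definite, `S = -W^{-1/2} V U⁻¹ Vᵀ W^{-1/2} = Q Λ Qᵀ` a spectral
decomposition with `Q` orthogonal and `Λ = diagonal d` invertible,
`X = U⁻¹ Vᵀ W^{-1/2} Q Λ⁻¹` and `Y = [[I, X],[0, W^{-1/2} Q]]`, the matrix
`Y⁻¹ = [[I, -X Qᵀ W^{1/2}],[0, Qᵀ W^{1/2}]]` is a two-sided inverse of `Y` and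
`Y ⬝ diag(I, I+Λ) ⬝ Y⁻¹ = [[I, U⁻¹Vᵀ],[0, I - W⁻¹ V U⁻¹ Vᵀ]]`; in particular the
latter block upper-triangular matrix is diagonalizable. -/
theorem stmt3 {m n : ℕ} (U : Matrix (Fin m) (Fin m) ℝ)
    (V : Matrix (Fin n) (Fin m) ℝ) (W : Matrix (Fin n) (Fin n) ℝ)
    (hU : U.PosDef) (hW : W.PosDef)
    (Q : Matrix (Fin n) (Fin n) ℝ) (hQ : Qᵀ * Q = 1 ∧ Q * Qᵀ = 1)
    (d : Fin n → ℝ) (hd : ∀ i, d i ≠ 0)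
    (hQd : Q * diagonal d * Qᵀ =
      -(hW.posSemidef.sqrt⁻¹ * V * U⁻¹ * Vᵀ * hW.posSemidef.sqrt⁻¹))
    (X : Matrix (Fin m) (Fin n) ℝ)
    (hX : X = U⁻¹ * Vᵀ * hW.posSemidef.sqrt⁻¹ * Q * (diagonal d)⁻¹)
    (Y Yinv : Matrix (Fin m ⊕ Fin n) (Fin m ⊕ Fin n) ℝ)
    (hY : Y = fromBlocks 1 X 0 (hW.posSemidef.sqrt⁻¹ * Q))
    (hYinv : Yinv = fromBlocks 1 (-(X * Qᵀ * hW.posSemidef.sqrt)) 0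
      (Qᵀ * hW.posSemidef.sqrt)) :
    Y * Yinv = 1 ∧ Yinv * Y = 1 ∧
    Y * fromBlocks 1 0 0 (1 + diagonal d) * Yinv =
      fromBlocks 1 (U⁻¹ * Vᵀ) 0 (1 - W⁻¹ * V * U⁻¹ * Vᵀ) := by
  obtain ⟨hQ1, hQ2⟩ := hQ
  set s := hW.posSemidef.sqrt with hs
  have hss : s * s = W := stmt3_sqrt_mul_self hW.posSemidef
  have hdet : IsUnit s.det := by
    have hWdet : W.det ≠ 0 := hW.det_pos.ne'
    rw [← hss, det_mul] at hWdet
    exact isUnit_iff_ne_zero.2 fun h => hWdet (by rw [h, zero_mul])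
  have hs1 : s⁻¹ * s = 1 := nonsing_inv_mul s hdet
  have hs2 : s * s⁻¹ = 1 := mul_nonsing_inv s hdet
  have hΛdet : IsUnit (diagonal d).det := by
    rw [det_diagonal]
    exact isUnit_iff_ne_zero.2 (Finset.prod_ne_zero_iff.2 fun i _ => hd i)
  have hΛ1 : (diagonal d)⁻¹ * diagonal d = 1 := nonsing_inv_mul _ hΛdet
  have hWinv : W⁻¹ = s⁻¹ * s⁻¹ := by
    rw [← hss, Matrix.mul_inv_rev s s]
  have hXΛ : X * diagonal d = U⁻¹ * Vᵀ * s⁻¹ * Q := by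
    rw [hX, Matrix.mul_assoc, hΛ1, Matrix.mul_one]
  have hcanc : ∀ (A : Matrix (Fin m) (Fin n) ℝ), A * s⁻¹ * Q * (Qᵀ * s) = A * s⁻¹ * s := by
    intro A
    rw [Matrix.mul_assoc (A * s⁻¹), ← Matrix.mul_assoc Q, hQ2, Matrix.one_mul]
  have hXQs : X * Qᵀ * s * (s⁻¹ * Q) = X := by
    rw [hX]
    calc U⁻¹ * Vᵀ * s⁻¹ * Q * (diagonal d)⁻¹ * Qᵀ * s * (s⁻¹ * Q)
        = U⁻¹ * Vᵀ * s⁻¹ * Q * (diagonal d)⁻¹ * Qᵀ * (s * s⁻¹) * Q := by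
          simp only [Matrix.mul_assoc]
      _ = U⁻¹ * Vᵀ * s⁻¹ * Q * ((diagonal d)⁻¹ * (Qᵀ * Q)) := by
          rw [hs2]; simp only [Matrix.mul_assoc, Matrix.mul_one]
      _ = U⁻¹ * Vᵀ * s⁻¹ * Q * (diagonal d)⁻¹ := by rw [hQ1, Matrix.mul_one]
  have hbr : s⁻¹ * Q * (Qᵀ * s) = 1 := by
    rw [Matrix.mul_assoc s⁻¹, ← Matrix.mul_assoc Q, hQ2, Matrix.one_mul, hs1]
  refine ⟨?_, ?_, ?_⟩
  · rw [hY, hYinv, fromBlocks_multiply, ← fromBlocks_one, fromBlocks_inj]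
    refine ⟨by simp, ?_, by simp, ?_⟩
    · simp [Matrix.mul_assoc]
    · simp [hbr]
  · rw [hYinv, hY, fromBlocks_multiply, ← fromBlocks_one, fromBlocks_inj]
    refine ⟨by simp, ?_, by simp, ?_⟩
    · rw [Matrix.one_mul, Matrix.neg_mul, hXQs]
      simp
    · rw [Matrix.zero_mul, zero_add, Matrix.mul_assoc, ← Matrix.mul_assoc s, hs2,
        Matrix.one_mul, hQ1]
  · rw [hY, hYinv, fromBlocks_multiply, fromBlocks_multiply, fromBlocks_inj]
    refine ⟨by simp, ?_, by simp, ?_⟩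
    · simp only [Matrix.one_mul, Matrix.mul_zero, Matrix.zero_mul, Matrix.mul_one,
        add_zero, zero_add, Matrix.mul_add, Matrix.add_mul]
      rw [hXΛ, hcanc, Matrix.mul_assoc (U⁻¹ * Vᵀ), hs1, Matrix.mul_one,
        Matrix.mul_assoc X Qᵀ s]
      abel
    · simp only [Matrix.one_mul, Matrix.mul_zero, Matrix.zero_mul, Matrix.mul_one,
        add_zero, zero_add, Matrix.mul_add, Matrix.add_mul]
      have e2 : s⁻¹ * Q * diagonal d * (Qᵀ * s) = -(W⁻¹ * V * U⁻¹ * Vᵀ) := by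
        have h : s⁻¹ * Q * diagonal d * (Qᵀ * s) = s⁻¹ * (Q * diagonal d * Qᵀ) * s := by
          simp only [Matrix.mul_assoc]
        rw [h, hQd, hWinv]
        simp only [Matrix.neg_mul, Matrix.mul_neg, Matrix.mul_assoc, hs1, Matrix.mul_one]
      rw [hbr, e2, sub_eq_add_neg]
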